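/- A nonzero matrix X belongs to the dual cone of the copositive cone COP(n) (with respect to the trace inner product on symmetric matrices) if and only if X belongs to the completely positive cone CP(n) = cone{xxᵀ : x ∈ ℝⁿ₊}; that is, CP(n)* = COP(n) and COP(n)* = CP(n). -/

import Mathlib

open Matrix
open scoped RealInnerProductSpace

/-- The copositive cone `COP(n)` (inside the symmetric matrices). -/
def COPset (n : ℕ) : Set (Matrix (Fin n) (Fin n) ℝ) :=
  {A | A.IsSymm ∧ ∀ t : Fin n → ℝ, (∀ i, 0 ≤ t i) → 0 ≤ t ⬝ᵥ A.mulVec t}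

/-- The completely positive cone `CP(n) = cone{xxᵀ : x ∈ ℝⁿ₊}`. -/
def CPset (n : ℕ) : Set (Matrix (Fin n) (Fin n) ℝ) :=
  {X | ∃ (m : ℕ) (c : Fin m → ℝ) (v : Fin m → Fin n → ℝ),
    (∀ k, 0 ≤ c k) ∧ (∀ k i, 0 ≤ v k i) ∧
    X = ∑ k, c k • Matrix.vecMulVec (v k) (v k)}

/-- The dual cone with respect to the trace inner product, taken inside the
space of symmetric matrices. -/
def traceDual (n : ℕ) (K : Set (Matrix (Fin n) (Fin n) ℝ)) :
    Set (Matrix (Fin n) (Fin n) ℝ) :=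
  {U | U.IsSymm ∧ ∀ X ∈ K, 0 ≤ (X * U).trace}

noncomputable section CopAux

namespace CopAux

variable {n : ℕ}

abbrev Esp (n : ℕ) := EuclideanSpace ℝ (Fin n × Fin n)

def mE (X : Matrix (Fin n) (Fin n) ℝ) : Esp n :=
  (WithLp.equiv 2 _).symm (fun p : Fin n × Fin n => X p.1 p.2)

lemma mE_apply (X : Matrix (Fin n) (Fin n) ℝ) (p : Fin n × Fin n) : mE X p = X p.1 p.2 := rfl

lemma mE_surj (w : Esp n) : mE (Matrix.of fun i j => w (i, j)) = w := by
  ext p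
  cases p
  rfl

lemma mE_add (X Y : Matrix (Fin n) (Fin n) ℝ) : mE (X + Y) = mE X + mE Y := rfl
lemma mE_smul (c : ℝ) (X : Matrix (Fin n) (Fin n) ℝ) : mE (c • X) = c • mE X := rfl
lemma mE_zero : mE (0 : Matrix (Fin n) (Fin n) ℝ) = 0 := rfl

lemma mE_inj : Function.Injective (mE (n := n)) := by
  intro X Y h
  ext i j
  exact congrArg (· (i, j)) h

def mEL (n : ℕ) : Matrix (Fin n) (Fin n) ℝ →ₗ[ℝ] Esp n :=
  { toFun := mE, map_add' := mE_add, map_smul' := mE_smul }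

lemma mE_sum {ι : Type*} (s : Finset ι) (f : ι → Matrix (Fin n) (Fin n) ℝ) :
    mE (∑ k ∈ s, f k) = ∑ k ∈ s, mE (f k) := map_sum (mEL n) f s

lemma inner_mE (X U : Matrix (Fin n) (Fin n) ℝ) :
    ⟪mE X, mE U⟫ = ∑ i, ∑ j, X i j * U i j := by
  simp [PiLp.inner_apply, RCLike.inner_apply, mE_apply, Fintype.sum_prod_type, mul_comm]

lemma inner_mE_trace (X U : Matrix (Fin n) (Fin n) ℝ) (hX : X.IsSymm) :
    ⟪mE X, mE U⟫ = (X * U).trace := by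
  rw [inner_mE]
  simp only [trace, diag, mul_apply, Finset.sum_apply]
  rw [Finset.sum_comm]
  congr 1; ext i; congr 1; ext j
  rw [← hX.apply i j]

lemma trace_vecMulVec_mul (v : Fin n → ℝ) (A : Matrix (Fin n) (Fin n) ℝ) :
    (vecMulVec v v * A).trace = v ⬝ᵥ A.mulVec v := by
  simp only [trace, diag, mul_apply, vecMulVec_apply, dotProduct, mulVec, Finset.sum_apply]
  rw [Finset.sum_comm]
  simp [Finset.mul_sum]
  congr 1; ext i; congr 1; ext j; ring

lemma trace_mul_vecMulVec (A : Matrix (Fin n) (Fin n) ℝ) (v : Fin n → ℝ) :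
    (A * vecMulVec v v).trace = v ⬝ᵥ A.mulVec v := by
  simp only [trace, diag, mul_apply, vecMulVec_apply, dotProduct, mulVec, Finset.sum_apply]
  simp [Finset.mul_sum]
  congr 1; ext i; congr 1; ext j; ring

lemma isSymm_vecMulVec (v : Fin n → ℝ) : (vecMulVec v v).IsSymm := by
  ext i j
  simp [vecMulVec_apply, transpose_apply, mul_comm]

lemma isSymm_CP {X : Matrix (Fin n) (Fin n) ℝ} (hX : X ∈ CPset n) : X.IsSymm := by
  obtain ⟨m, c, v, hc, hv, rfl⟩ := hX
  unfold Matrix.IsSymm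
  rw [transpose_sum]
  refine Finset.sum_congr rfl fun k _ => ?_
  rw [transpose_smul, isSymm_vecMulVec]

lemma CP_add {X Y : Matrix (Fin n) (Fin n) ℝ} (hX : X ∈ CPset n) (hY : Y ∈ CPset n) :
    X + Y ∈ CPset n := by
  obtain ⟨m, c, v, hc, hv, rfl⟩ := hX
  obtain ⟨m', c', v', hc', hv', rfl⟩ := hY
  refine ⟨m + m', Fin.append c c', Fin.append v v', ?_, ?_, ?_⟩
  · intro k
    refine Fin.addCases (fun i => ?_) (fun i => ?_) k
    · rw [Fin.append_left]; exact hc i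
    · rw [Fin.append_right]; exact hc' i
  · intro k
    refine Fin.addCases (fun i => ?_) (fun i => ?_) k
    · rw [Fin.append_left]; exact hv i
    · rw [Fin.append_right]; exact hv' i
  · rw [Fin.sum_univ_add]
    congr 1
    · refine Finset.sum_congr rfl fun k _ => ?_
      rw [Fin.append_left, Fin.append_left]
    · refine Finset.sum_congr rfl fun k _ => ?_
      rw [Fin.append_right, Fin.append_right]

/-- rank-one generator in the Euclidean picture -/
def gE (x : Fin n → ℝ) : Esp n := mE (vecMulVec x x)

lemma inner_gE (x : Fin n → ℝ) (A : Matrix (Fin n) (Fin n) ℝ) :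
    ⟪gE x, mE A⟫ = x ⬝ᵥ A.mulVec x := by
  rw [gE, inner_mE_trace _ _ (isSymm_vecMulVec x), trace_vecMulVec_mul]

lemma gE_smul (s : ℝ) (x : Fin n → ℝ) : gE (s • x) = (s ^ 2) • gE x := by
  ext p
  show (vecMulVec (s • x) (s • x)) p.1 p.2 = s ^ 2 * (vecMulVec x x) p.1 p.2
  simp [vecMulVec_apply]
  ring

def Cset (n : ℕ) : Set (Esp n) :=
  {z | ∃ (c : Fin (n * n + 1) → ℝ) (x : Fin (n * n + 1) → Fin n → ℝ),
    (∀ k, 0 ≤ c k) ∧ (∀ k, x k ∈ stdSimplex ℝ (Fin n)) ∧ z = ∑ k, c k • gE (x k)}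

lemma e₀_mem (hn : 0 < n) : (fun i : Fin n => if i = ⟨0, hn⟩ then (1:ℝ) else 0) ∈ stdSimplex ℝ (Fin n) := by
  constructor
  · intro i; dsimp; split <;> norm_num
  · simp

lemma sum_pad {m : ℕ} (hm : m ≤ n * n + 1)
    (c : Fin m → ℝ) (x : Fin m → Fin n → ℝ)
    (c'' : ℕ → ℝ) (x'' : ℕ → Fin n → ℝ)
    (hcc : ∀ k (h : k < m), c'' k = c ⟨k, h⟩) (hxx : ∀ k (h : k < m), x'' k = x ⟨k, h⟩)
    (hc0 : ∀ k, ¬ k < m → c'' k = 0) :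
    (∑ k, c k • gE (x k)) = ∑ k : Fin (n * n + 1), c'' (k : ℕ) • gE (x'' (k : ℕ)) := by
  have h1 : ∑ k : Fin (n*n+1), c'' (k : ℕ) • gE (x'' (k : ℕ))
      = ∑ k ∈ Finset.range (n*n+1), c'' k • gE (x'' k) :=
    Fin.sum_univ_eq_sum_range (fun k => c'' k • gE (x'' k)) (n*n+1)
  have h2 : ∑ k ∈ Finset.range (n*n+1), c'' k • gE (x'' k)
      = ∑ k ∈ Finset.range m, c'' k • gE (x'' k) := by
    refine (Finset.sum_subset (Finset.range_subset_range.2 (by omega)) ?_).symm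
    intro k _ hk
    have hkm : ¬ k < m := by simpa using hk
    simp [hc0 k hkm]
  have h3 : ∑ k ∈ Finset.range m, c'' k • gE (x'' k)
      = ∑ k : Fin m, c'' (k : ℕ) • gE (x'' (k : ℕ)) :=
    (Fin.sum_univ_eq_sum_range (fun k => c'' k • gE (x'' k)) m).symm
  rw [h1, h2, h3]
  refine Finset.sum_congr rfl fun k _ => ?_
  rw [hcc k k.isLt, hxx k k.isLt]

lemma pad_mem_C (hn : 0 < n) {m : ℕ} (hm : m ≤ n * n + 1)
    (c : Fin m → ℝ) (x : Fin m → Fin n → ℝ)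
    (hc : ∀ k, 0 ≤ c k) (hx : ∀ k, x k ∈ stdSimplex ℝ (Fin n)) :
    (∑ k, c k • gE (x k)) ∈ Cset n := by
  classical
  set c'' : ℕ → ℝ := fun k => if h : k < m then c ⟨k, h⟩ else 0 with hc''
  set x'' : ℕ → Fin n → ℝ :=
    fun k => if h : k < m then x ⟨k, h⟩ else (fun i => if i = ⟨0, hn⟩ then (1:ℝ) else 0) with hx''
  have hcc : ∀ k (h : k < m), c'' k = c ⟨k, h⟩ := fun k h => dif_pos h
  have hxx : ∀ k (h : k < m), x'' k = x ⟨k, h⟩ := fun k h => dif_pos h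
  have hc0 : ∀ k, ¬ k < m → c'' k = 0 := fun k h => dif_neg h
  refine ⟨fun k => c'' (k : ℕ), fun k => x'' (k : ℕ), ?_, ?_, sum_pad hm c x c'' x'' hcc hxx hc0⟩
  · intro k
    show 0 ≤ c'' (k : ℕ)
    by_cases h : (k : ℕ) < m
    · rw [hcc _ h]; exact hc _
    · rw [hc0 _ h]
  · intro k
    show x'' (k : ℕ) ∈ stdSimplex ℝ (Fin n)
    by_cases h : (k : ℕ) < m
    · rw [hxx _ h]; exact hx _
    · have : x'' (k : ℕ) = fun i => if i = ⟨0, hn⟩ then (1:ℝ) else 0 := dif_neg h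
      rw [this]; exact e₀_mem hn

lemma zero_mem_C (hn : 0 < n) : (0 : Esp n) ∈ Cset n := by
  have h := pad_mem_C hn (m := 0) (by omega) (fun k => 0) (fun k => k.elim0)
    (fun k => k.elim0) (fun k => k.elim0)
  simpa using h

lemma rep_mem_C (hn : 0 < n) {m : ℕ} (d : Fin m → ℝ) (u : Fin m → Fin n → ℝ)
    (hd : ∀ k, 0 ≤ d k) (hu : ∀ k, u k ∈ stdSimplex ℝ (Fin n)) :
    (∑ k, d k • gE (u k)) ∈ Cset n := by
  by_cases hT : ∑ k, d k = 0
  · have hz : ∀ k ∈ Finset.univ, d k • gE (u k) = (0 : Esp n) := fun k _ => by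
      rw [(Finset.sum_eq_zero_iff_of_nonneg (fun k _ => hd k)).1 hT k (Finset.mem_univ k),
        zero_smul]
    rw [Finset.sum_eq_zero hz]
    exact zero_mem_C hn
  · have hT' : 0 < ∑ k, d k :=
      lt_of_le_of_ne (Finset.sum_nonneg fun k _ => hd k) (Ne.symm hT)
    have hy : Finset.univ.centerMass d (fun k => gE (u k))
        ∈ convexHull ℝ (gE '' stdSimplex ℝ (Fin n)) :=
      Finset.centerMass_mem_convexHull _ (fun k _ => hd k) hT' (fun k _ => ⟨u k, hu k, rfl⟩)
    obtain ⟨ι, hfin, zf, w, hrange, haff, hwpos, hwsum, hrep⟩ :=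
      eq_pos_convex_span_of_mem_convexHull hy
    have hcard : Fintype.card ι ≤ n * n + 1 := by
      rcases isEmpty_or_nonempty ι with h | h
      · simp [Fintype.card_eq_zero]
      · have h1 := haff.finrank_vectorSpan_add_one
        have h2 : Module.finrank ℝ (vectorSpan ℝ (Set.range zf))
            ≤ Module.finrank ℝ (Esp n) := Submodule.finrank_le _
        have h3 : Module.finrank ℝ (Esp n) = n * n := by
          rw [finrank_euclideanSpace]; simp
        omega
    have hchoice : ∀ i : ι, ∃ xx, xx ∈ stdSimplex ℝ (Fin n) ∧ gE xx = zf i := fun i => by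
      obtain ⟨xx, hx1, hx2⟩ := hrange (Set.mem_range_self i); exact ⟨xx, hx1, hx2⟩
    choose xf hxf hgxf using hchoice
    set T := ∑ k, d k with hTdef
    have hcm : Finset.univ.centerMass d (fun k => gE (u k))
        = T⁻¹ • ∑ k, d k • gE (u k) := by
      rw [Finset.centerMass]
    have hz : (∑ k, d k • gE (u k)) = ∑ i : ι, (T * w i) • gE (xf i) := by
      calc ∑ k, d k • gE (u k) = T • (T⁻¹ • ∑ k, d k • gE (u k)) := by
            rw [smul_smul, mul_inv_cancel₀ (ne_of_gt hT'), one_smul]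
        _ = T • ∑ i : ι, w i • zf i := by rw [← hcm, ← hrep]
        _ = ∑ i : ι, (T * w i) • gE (xf i) := by
            rw [Finset.smul_sum]
            exact Finset.sum_congr rfl fun i _ => by rw [hgxf, smul_smul]
    rw [hz]
    have hre : ∑ i : ι, (T * w i) • gE (xf i)
        = ∑ k : Fin (Fintype.card ι),
            (T * w ((Fintype.equivFin ι).symm k)) • gE (xf ((Fintype.equivFin ι).symm k)) :=
      (Equiv.sum_comp (Fintype.equivFin ι).symm fun i => (T * w i) • gE (xf i)).symm
    rw [hre]
    exact pad_mem_C hn hcard _ _ (fun k => mul_nonneg hT'.le (hwpos _).le) (fun k => hxf _)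

lemma vecMulVec_mem_CP (t : Fin n → ℝ) (ht : ∀ i, 0 ≤ t i) : vecMulVec t t ∈ CPset n := by
  refine ⟨1, fun _ => 1, fun _ => t, fun _ => zero_le_one, fun _ => ht, ?_⟩
  simp

lemma mem_C_of_CP (hn : 0 < n) {X : Matrix (Fin n) (Fin n) ℝ} (hX : X ∈ CPset n) :
    mE X ∈ Cset n := by
  obtain ⟨m, c, v, hc, hv, rfl⟩ := hX
  rw [mE_sum]
  have hterm : ∀ k : Fin m, mE (c k • vecMulVec (v k) (v k))
      = (c k * (∑ i, v k i) ^ 2) •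
        gE (if h : (∑ i, v k i) = 0 then (fun i => if i = ⟨0, hn⟩ then (1:ℝ) else 0)
            else (∑ i, v k i)⁻¹ • v k) := by
    intro k
    by_cases h : (∑ i, v k i) = 0
    · have hv0 : v k = 0 := by
        funext i
        exact (Finset.sum_eq_zero_iff_of_nonneg (fun i _ => hv k i)).1 h i (Finset.mem_univ i)
      rw [dif_pos h, h]
      rw [mE_smul, hv0]
      show c k • gE (0 : Fin n → ℝ) = _
      have : gE (0 : Fin n → ℝ) = 0 := by
        rw [show (0 : Fin n → ℝ) = (0:ℝ) • (0 : Fin n → ℝ) by simp, gE_smul]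
        simp
      rw [this]
      simp
    · rw [dif_neg h, gE_smul]
      rw [mE_smul]
      show c k • gE (v k) = _
      rw [smul_smul]
      congr 1
      field_simp
  rw [Finset.sum_congr rfl fun k _ => hterm k]
  refine rep_mem_C hn _ _ (fun k => mul_nonneg (hc k) (sq_nonneg _)) ?_
  intro k
  by_cases h : (∑ i, v k i) = 0
  · rw [dif_pos h]; exact e₀_mem hn
  · rw [dif_neg h]
    have hs : 0 < ∑ i, v k i :=
      lt_of_le_of_ne (Finset.sum_nonneg fun i _ => hv k i) (Ne.symm h)
    constructor
    · intro i
      exact mul_nonneg (inv_nonneg.2 hs.le) (hv k i)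
    · show ∑ i, (∑ j, v k j)⁻¹ * v k i = 1
      rw [← Finset.mul_sum, inv_mul_cancel₀ h]

lemma CP_of_mem_C {z : Esp n} (hz : z ∈ Cset n) : ∃ X ∈ CPset n, mE X = z := by
  obtain ⟨c, x, hc, hx, rfl⟩ := hz
  refine ⟨∑ k, c k • vecMulVec (x k) (x k),
    ⟨_, c, x, hc, fun k i => (hx k).1 i, rfl⟩, ?_⟩
  rw [mE_sum]
  exact Finset.sum_congr rfl fun k _ => by rw [mE_smul]; rfl

def Lsum (n : ℕ) : Esp n →ₗ[ℝ] ℝ where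
  toFun z := ∑ p, z p
  map_add' x y := by
    simp only [PiLp.add_apply]
    rw [← Finset.sum_add_distrib]
  map_smul' c x := by
    simp only [PiLp.smul_apply, smul_eq_mul, RingHom.id_apply]
    rw [Finset.mul_sum]

lemma Lsum_gE {x : Fin n → ℝ} (hx : x ∈ stdSimplex ℝ (Fin n)) : Lsum n (gE x) = 1 := by
  show ∑ p : Fin n × Fin n, (vecMulVec x x) p.1 p.2 = 1
  rw [Fintype.sum_prod_type]
  simp only [vecMulVec_apply]
  have : ∀ i, ∑ j, x i * x j = x i := fun i => by
    rw [← Finset.mul_sum, hx.2, mul_one]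
  rw [Finset.sum_congr rfl fun i _ => this i, hx.2]

lemma cont_gE : Continuous (gE (n := n)) := by
  have h1 : Continuous (fun x : Fin n → ℝ => (fun p : Fin n × Fin n => x p.1 * x p.2)) :=
    continuous_pi fun p => ((continuous_apply p.1).mul (continuous_apply p.2))
  exact ((PiLp.continuous_toLp 2 (fun _ : Fin n × Fin n => ℝ)).comp h1 : _)

lemma isClosed_C : IsClosed (Cset n) := by
  refine IsSeqClosed.isClosed ?_
  intro u z hu huz
  choose c x hc hx hrep using hu
  have hLcont : Continuous (Lsum n) := (Lsum n).continuous_of_finiteDimensional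
  have hLu : Filter.Tendsto (fun m => Lsum n (u m)) Filter.atTop (nhds (Lsum n z)) :=
    (hLcont.tendsto z).comp huz
  obtain ⟨B, hB⟩ := hLu.bddAbove_range
  have hsum : ∀ m, ∑ k, c m k = Lsum n (u m) := fun m => by
    rw [hrep m, map_sum]
    refine Finset.sum_congr rfl fun k _ => ?_
    rw [_root_.map_smul, Lsum_gE (hx m k), smul_eq_mul, mul_one]
  have hck : ∀ m k, c m k ∈ Set.Icc (0:ℝ) B := fun m k =>
    ⟨hc m k, le_trans (Finset.single_le_sum (fun k _ => hc m k) (Finset.mem_univ k))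
      (le_of_eq_of_le (hsum m) (hB ⟨m, rfl⟩))⟩
  set D := (Set.univ.pi fun _ : Fin (n*n+1) => Set.Icc (0:ℝ) B) ×ˢ
    (Set.univ.pi fun _ : Fin (n*n+1) => stdSimplex ℝ (Fin n)) with hD'
  have hD : IsCompact D :=
    ((isCompact_univ_pi fun _ => isCompact_Icc).prod
      (isCompact_univ_pi fun _ => isCompact_stdSimplex _ _))
  have hmem : ∀ m, (c m, x m) ∈ D := fun m =>
    ⟨fun k _ => hck m k, fun k _ => hx m k⟩
  obtain ⟨q, hqD, φ, hφ, hconv⟩ := hD.tendsto_subseq hmem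
  set F : (Fin (n*n+1) → ℝ) × (Fin (n*n+1) → Fin n → ℝ) → Esp n :=
    fun q => ∑ k, q.1 k • gE (q.2 k) with hF'
  have hFcont : Continuous F := continuous_finset_sum _ fun k _ =>
    ((continuous_apply k).comp continuous_fst).smul
      (cont_gE.comp ((continuous_apply k).comp continuous_snd))
  have h1 : Filter.Tendsto (fun j => u (φ j)) Filter.atTop (nhds (F q)) := by
    have he : (fun j => u (φ j)) = fun j => F (c (φ j), x (φ j)) := funext fun j => hrep (φ j)
    rw [he]
    exact (hFcont.tendsto q).comp hconv
  have h2 : Filter.Tendsto (fun j => u (φ j)) Filter.atTop (nhds z) :=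
    huz.comp hφ.tendsto_atTop
  have hzF : z = F q := tendsto_nhds_unique h2 h1
  exact ⟨q.1, q.2, fun k => (hqD.1 k (Set.mem_univ k)).1, fun k => hqD.2 k (Set.mem_univ k), hzF⟩

def Kcone (n : ℕ) (hn : 0 < n) : ConvexCone ℝ (Esp n) where
  carrier := Cset n
  smul_mem' := by
    intro r hr z hz
    obtain ⟨X, hX, rfl⟩ := CP_of_mem_C hz
    rw [← mE_smul]
    refine mem_C_of_CP hn ?_
    obtain ⟨m, cc, v, hcc, hv, rfl⟩ := hX
    refine ⟨m, fun k => r * cc k, v, fun k => mul_nonneg hr.le (hcc k), hv, ?_⟩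
    rw [Finset.smul_sum]
    exact Finset.sum_congr rfl fun k _ => smul_smul r (cc k) _
  add_mem' := by
    intro z hz w hw
    obtain ⟨X, hX, rfl⟩ := CP_of_mem_C hz
    obtain ⟨Y, hY, rfl⟩ := CP_of_mem_C hw
    rw [← mE_add]
    exact mem_C_of_CP hn (CP_add hX hY)

lemma dot_transpose (t : Fin n → ℝ) (A : Matrix (Fin n) (Fin n) ℝ) :
    t ⬝ᵥ Aᵀ.mulVec t = t ⬝ᵥ A.mulVec t := by
  simp only [dotProduct, mulVec, transpose_apply, Finset.mul_sum]
  rw [Finset.sum_comm]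
  congr 1; ext i; congr 1; ext j; ring

lemma trace_mul_CP_nonneg_left {A X : Matrix (Fin n) (Fin n) ℝ} (hX : X ∈ CPset n)
    (hA : ∀ t : Fin n → ℝ, (∀ i, 0 ≤ t i) → 0 ≤ t ⬝ᵥ A.mulVec t) : 0 ≤ (X * A).trace := by
  obtain ⟨m, c, v, hc, hv, rfl⟩ := hX
  rw [Matrix.sum_mul, trace_sum]
  refine Finset.sum_nonneg fun k _ => ?_
  rw [Matrix.smul_mul, trace_smul, smul_eq_mul, trace_vecMulVec_mul]
  exact mul_nonneg (hc k) (hA (v k) (hv k))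

lemma trace_mul_CP_nonneg_right {A X : Matrix (Fin n) (Fin n) ℝ} (hX : X ∈ CPset n)
    (hA : ∀ t : Fin n → ℝ, (∀ i, 0 ≤ t i) → 0 ≤ t ⬝ᵥ A.mulVec t) : 0 ≤ (A * X).trace := by
  obtain ⟨m, c, v, hc, hv, rfl⟩ := hX
  rw [Matrix.mul_sum, trace_sum]
  refine Finset.sum_nonneg fun k _ => ?_
  rw [Matrix.mul_smul, trace_smul, smul_eq_mul, trace_mul_vecMulVec]
  exact mul_nonneg (hc k) (hA (v k) (hv k))

end CopAux

end CopAux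

theorem cop_cp_duality (n : ℕ) :
    traceDual n (COPset n) = CPset n ∧ traceDual n (CPset n) = COPset n := by
  rcases Nat.eq_zero_or_pos n with rfl | hn
  · have hsym : ∀ X : Matrix (Fin 0) (Fin 0) ℝ, X.IsSymm := fun X => by
      show Xᵀ = X
      ext i j
      exact i.elim0
    have hCP : ∀ X : Matrix (Fin 0) (Fin 0) ℝ, X ∈ CPset 0 := fun X => by
      refine ⟨0, Fin.elim0, Fin.elim0, fun k => k.elim0, fun k => k.elim0, ?_⟩
      ext i j
      exact i.elim0
    have hCOP : ∀ X : Matrix (Fin 0) (Fin 0) ℝ, X ∈ COPset 0 := fun X =>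
      ⟨hsym X, fun t ht => by simp [dotProduct]⟩
    have hTD : ∀ (K) (X : Matrix (Fin 0) (Fin 0) ℝ), X ∈ traceDual 0 K := fun K X =>
      ⟨hsym X, fun Y _ => by simp [Matrix.trace]⟩
    exact ⟨Set.ext fun X => ⟨fun _ => hCP X, fun _ => hTD _ X⟩,
           Set.ext fun X => ⟨fun _ => hCOP X, fun _ => hTD _ X⟩⟩
  constructor
  · ext X
    constructor
    · rintro ⟨hsym, h⟩
      have hbi : ProperCone.innerDual (ProperCone.innerDual (CopAux.Cset n) : Set (CopAux.Esp n))
          = (⟨(CopAux.Kcone n hn).toPointedCone (CopAux.zero_mem_C hn), CopAux.isClosed_C⟩ :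
            ProperCone ℝ (CopAux.Esp n)) :=
        ProperCone.innerDual_innerDual
          (⟨(CopAux.Kcone n hn).toPointedCone (CopAux.zero_mem_C hn), CopAux.isClosed_C⟩ :
            ProperCone ℝ (CopAux.Esp n))
      have hmem : CopAux.mE X ∈
          ProperCone.innerDual (ProperCone.innerDual (CopAux.Cset n) : Set (CopAux.Esp n)) := by
        rw [ProperCone.mem_innerDual]
        intro w hw
        rw [SetLike.mem_coe, ProperCone.mem_innerDual] at hw
        set A := Matrix.of (fun i j => w (i, j)) with hAdef
        have hA : CopAux.mE A = w := CopAux.mE_surj w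
        have hquad : ∀ t : Fin n → ℝ, (∀ i, 0 ≤ t i) → 0 ≤ t ⬝ᵥ A.mulVec t := by
          intro t ht
          rw [← CopAux.inner_gE, hA]
          exact hw (CopAux.mem_C_of_CP hn (CopAux.vecMulVec_mem_CP t ht))
        set B := (2⁻¹ : ℝ) • (A + Aᵀ) with hBdef
        have hBsym : B.IsSymm := by
          show Bᵀ = B
          rw [hBdef, transpose_smul, transpose_add, transpose_transpose, add_comm]
        have hBcop : B ∈ COPset n := by
          refine ⟨hBsym, fun t ht => ?_⟩
          have e1 : t ⬝ᵥ B.mulVec t = 2⁻¹ * (t ⬝ᵥ A.mulVec t + t ⬝ᵥ Aᵀ.mulVec t) := by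
            rw [hBdef, smul_mulVec, add_mulVec, dotProduct_smul, dotProduct_add]
            simp [smul_eq_mul]
          rw [e1, CopAux.dot_transpose]
          have := hquad t ht
          linarith
        have htr : 0 ≤ (B * X).trace := h B hBcop
        have hAt : (Aᵀ * X).trace = (X * A).trace := by
          conv_lhs => rw [← trace_transpose, transpose_mul, transpose_transpose, hsym]
        have hAX : (A * X).trace = (X * A).trace := trace_mul_comm A X
        have hkey : ⟪w, CopAux.mE X⟫ = (B * X).trace := by
          rw [← hA, real_inner_comm, CopAux.inner_mE_trace X A hsym]
          rw [hBdef, Matrix.smul_mul, Matrix.add_mul, trace_smul, trace_add, hAt, hAX]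
          simp only [smul_eq_mul]
          ring
        rw [hkey]
        exact htr
      rw [hbi] at hmem
      obtain ⟨X', hX', hEX⟩ := CopAux.CP_of_mem_C hmem
      rwa [← CopAux.mE_inj hEX]
    · intro hX
      exact ⟨CopAux.isSymm_CP hX, fun A hA => CopAux.trace_mul_CP_nonneg_right hX hA.2⟩
  · ext A
    constructor
    · rintro ⟨hsymA, h⟩
      refine ⟨hsymA, fun t ht => ?_⟩
      have := h (vecMulVec t t) (CopAux.vecMulVec_mem_CP t ht)
      rwa [CopAux.trace_vecMulVec_mul] at this
    · rintro ⟨hsymA, hq⟩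
      exact ⟨hsymA, fun X hX => CopAux.trace_mul_CP_nonneg_left hX hq⟩
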